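/- Let A = (a_{i,j}) be an r×r symmetrizable generalized Cartan matrix. For any function v : [1,r] → ℤ there exists a unique tropical frieze f : [1,r]×ℤ → ℤ associated to A (i.e. satisfying f(i,m)+f(i,m+1) = [Σ_{j>i}(-a_{j,i})f(j,m) + Σ_{j<i}(-a_{j,i})f(j,m+1)]_+ for all (i,m)) with f(i,0) = v(i) for all i ∈ [1,r]. Hence evaluation on [1,r]×{0} gives a bijection between tropical friezes associated to A and ℤ^r. -/

import Mathlib

open Finset

/-- An `r × r` symmetrizable generalized Cartan matrix. -/
def IsSGCM {r : ℕ} (A : Matrix (Fin r) (Fin r) ℤ) : Prop :=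
  (∀ i, A i i = 2) ∧ (∀ i j, i ≠ j → A i j ≤ 0) ∧
    ∃ D : Fin r → ℤ, (∀ i, 0 < D i) ∧ ∀ i j, D i * A i j = D j * A j i

/-- A cluster-additive function associated to `A`. -/
def ClusterAdditive {r : ℕ} (A : Matrix (Fin r) (Fin r) ℤ) (k : Fin r → ℤ → ℤ) : Prop :=
  ∀ (i : Fin r) (m : ℤ),
    k i m + k i (m + 1) =
      (∑ j ∈ Finset.univ.filter (fun j => i < j), (-(A j i)) * max (k j m) 0) +
        ∑ j ∈ Finset.univ.filter (fun j => j < i), (-(A j i)) * max (k j (m + 1)) 0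

/-- A tropical frieze associated to `A`. -/
def TropicalFrieze {r : ℕ} (A : Matrix (Fin r) (Fin r) ℤ) (f : Fin r → ℤ → ℤ) : Prop :=
  ∀ (i : Fin r) (m : ℤ),
    f i m + f i (m + 1) =
      max ((∑ j ∈ Finset.univ.filter (fun j => i < j), (-(A j i)) * f j m) +
        ∑ j ∈ Finset.univ.filter (fun j => j < i), (-(A j i)) * f j (m + 1)) 0

/-- For any prescribed values on the slice `[1,r] × {0}` there is a unique tropical frieze
associated to a symmetrizable generalized Cartan matrix `A` taking these values;
hence evaluation at the `0`-th slice is a bijection `C_frieze(A) ≅ ℤ^r`. -/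
def nextCol {r : ℕ} (A : Matrix (Fin r) (Fin r) ℤ) (c : Fin r → ℤ) (i : Fin r) : ℤ :=
  max ((∑ j ∈ Finset.univ.filter (fun j => i < j), (-(A j i)) * c j) +
    ∑ j ∈ (Finset.univ.filter (fun j => j < i)).attach, (-(A j.1 i)) * nextCol A c j.1) 0 - c i
termination_by i.val
decreasing_by
  have h := (Finset.mem_filter.mp j.2).2
  exact h

def prevCol {r : ℕ} (A : Matrix (Fin r) (Fin r) ℤ) (c : Fin r → ℤ) (i : Fin r) : ℤ :=
  max ((∑ j ∈ (Finset.univ.filter (fun j => i < j)).attach, (-(A j.1 i)) * prevCol A c j.1) +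
    ∑ j ∈ Finset.univ.filter (fun j => j < i), (-(A j i)) * c j) 0 - c i
termination_by r - i.val
decreasing_by
  have h : i < j.1 := (Finset.mem_filter.mp j.2).2
  have h2 := j.1.isLt
  have h3 : i.val < j.1.val := h
  omega

lemma nextCol_spec {r : ℕ} (A : Matrix (Fin r) (Fin r) ℤ) (c : Fin r → ℤ) (i : Fin r) :
    c i + nextCol A c i =
      max ((∑ j ∈ Finset.univ.filter (fun j => i < j), (-(A j i)) * c j) +
        ∑ j ∈ Finset.univ.filter (fun j => j < i), (-(A j i)) * nextCol A c j) 0 := by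
  rw [nextCol, Finset.sum_attach _ (fun j => (-(A j i)) * nextCol A c j)]
  ring

lemma prevCol_spec {r : ℕ} (A : Matrix (Fin r) (Fin r) ℤ) (c : Fin r → ℤ) (i : Fin r) :
    c i + prevCol A c i =
      max ((∑ j ∈ Finset.univ.filter (fun j => i < j), (-(A j i)) * prevCol A c j) +
        ∑ j ∈ Finset.univ.filter (fun j => j < i), (-(A j i)) * c j) 0 := by
  rw [prevCol, Finset.sum_attach _ (fun j => (-(A j i)) * prevCol A c j)]
  ring

lemma prev_next {r : ℕ} (A : Matrix (Fin r) (Fin r) ℤ) (c : Fin r → ℤ) :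
    prevCol A (nextCol A c) = c := by
  have key : ∀ n, ∀ i : Fin r, r - i.val = n → prevCol A (nextCol A c) i = c i := by
    intro n
    induction n using Nat.strong_induction_on with
    | _ n ih =>
      intro i hi
      rw [prevCol, Finset.sum_attach _ (fun j => (-(A j i)) * prevCol A (nextCol A c) j)]
      have hrec : ∀ j ∈ Finset.univ.filter (fun j => i < j),
          (-(A j i)) * prevCol A (nextCol A c) j = (-(A j i)) * c j := by
        intro j hj
        have h1 : i < j := (Finset.mem_filter.mp hj).2
        have h2 : i.val < j.val := h1
        have h3 := j.isLt
        rw [ih (r - j.val) (by omega) j rfl]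
      rw [Finset.sum_congr rfl hrec]
      have hs := nextCol_spec A c i
      omega
  funext i
  exact key (r - i.val) i rfl

lemma next_prev {r : ℕ} (A : Matrix (Fin r) (Fin r) ℤ) (c : Fin r → ℤ) :
    nextCol A (prevCol A c) = c := by
  have key : ∀ n, ∀ i : Fin r, i.val = n → nextCol A (prevCol A c) i = c i := by
    intro n
    induction n using Nat.strong_induction_on with
    | _ n ih =>
      intro i hi
      rw [nextCol, Finset.sum_attach _ (fun j => (-(A j i)) * nextCol A (prevCol A c) j)]
      have hrec : ∀ j ∈ Finset.univ.filter (fun j => j < i),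
          (-(A j i)) * nextCol A (prevCol A c) j = (-(A j i)) * c j := by
        intro j hj
        have h1 : j < i := (Finset.mem_filter.mp hj).2
        have h2 : j.val < i.val := h1
        rw [ih j.val (by omega) j rfl]
      rw [Finset.sum_congr rfl hrec]
      have hs := prevCol_spec A c i
      omega
  funext i
  exact key i.val i rfl

def colsFun {r : ℕ} (A : Matrix (Fin r) (Fin r) ℤ) (v : Fin r → ℤ) : ℤ → Fin r → ℤ
  | Int.ofNat n => (nextCol A)^[n] v
  | Int.negSucc n => (prevCol A)^[n + 1] v

lemma colsFun_zero {r : ℕ} (A : Matrix (Fin r) (Fin r) ℤ) (v : Fin r → ℤ) :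
    colsFun A v 0 = v := rfl

lemma colsFun_succ {r : ℕ} (A : Matrix (Fin r) (Fin r) ℤ) (v : Fin r → ℤ) (m : ℤ) :
    colsFun A v (m + 1) = nextCol A (colsFun A v m) := by
  cases m with
  | ofNat n =>
    show colsFun A v (Int.ofNat (n + 1)) = _
    simp only [colsFun, Function.iterate_succ_apply']
  | negSucc n =>
    cases n with
    | zero =>
      show v = nextCol A (prevCol A v)
      rw [next_prev]
    | succ n =>
      show colsFun A v (Int.negSucc n) = nextCol A (colsFun A v (Int.negSucc (n + 1)))
      simp only [colsFun]
      rw [Function.iterate_succ_apply' (prevCol A) (n + 1), next_prev]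

lemma frieze_step {r : ℕ} (A : Matrix (Fin r) (Fin r) ℤ) (g : Fin r → ℤ → ℤ)
    (hg : TropicalFrieze A g) (m : ℤ) :
    (fun i => g i (m + 1)) = nextCol A (fun i => g i m) := by
  have key : ∀ n, ∀ i : Fin r, i.val = n → g i (m + 1) = nextCol A (fun i => g i m) i := by
    intro n
    induction n using Nat.strong_induction_on with
    | _ n ih =>
      intro i hi
      rw [nextCol, Finset.sum_attach _ (fun j => (-(A j i)) * nextCol A (fun i => g i m) j)]
      have hrec : ∀ j ∈ Finset.univ.filter (fun j => j < i),
          (-(A j i)) * nextCol A (fun i => g i m) j = (-(A j i)) * g j (m + 1) := by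
        intro j hj
        have h1 : j < i := (Finset.mem_filter.mp hj).2
        have h2 : j.val < i.val := h1
        rw [← ih j.val (by omega) j rfl]
      rw [Finset.sum_congr rfl hrec]
      have hs := hg i m
      omega
  funext i
  exact key i.val i rfl

theorem tropical_frieze_exists_unique_of_slice {r : ℕ} (A : Matrix (Fin r) (Fin r) ℤ)
    (hA : IsSGCM A) (v : Fin r → ℤ) :
    ∃! f : Fin r → ℤ → ℤ, TropicalFrieze A f ∧ ∀ i, f i 0 = v i := by
  refine ⟨fun i m => colsFun A v m i, ⟨?_, ?_⟩, ?_⟩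
  · intro i m
    show colsFun A v m i + colsFun A v (m + 1) i =
      max ((∑ j ∈ Finset.univ.filter (fun j => i < j), (-(A j i)) * colsFun A v m j) +
        ∑ j ∈ Finset.univ.filter (fun j => j < i), (-(A j i)) * colsFun A v (m + 1) j) 0
    rw [colsFun_succ A v m]
    exact nextCol_spec A (colsFun A v m) i
  · intro i
    show colsFun A v 0 i = v i
    rw [colsFun_zero]
  · rintro g ⟨hg, hg0⟩
    have hcol : ∀ m : ℤ, (fun i => g i m) = colsFun A v m := by
      intro m
      induction m using Int.induction_on with
      | zero => funext i; rw [colsFun_zero]; exact hg0 i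
      | succ n ihn =>
        rw [frieze_step A g hg n, ihn, colsFun_succ]
      | pred n ihn =>
        have h1 : (fun i => g i (-(n : ℤ))) = nextCol A (fun i => g i (-(n : ℤ) - 1)) := by
          have := frieze_step A g hg (-(n : ℤ) - 1)
          simpa using this
        have h2 : colsFun A v (-(n : ℤ)) = nextCol A (colsFun A v (-(n : ℤ) - 1)) := by
          have := colsFun_succ A v (-(n : ℤ) - 1)
          simpa using this
        have h3 : prevCol A (fun i => g i (-(n : ℤ))) = (fun i => g i (-(n : ℤ) - 1)) := by
          rw [h1, prev_next]
        have h4 : prevCol A (colsFun A v (-(n : ℤ))) = colsFun A v (-(n : ℤ) - 1) := by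
          rw [h2, prev_next]
        rw [← h3, ihn, h4]
    funext i m
    exact congrFun (hcol m) i
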